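/- For any directed graph G with finitely many strongly connected components, every partition {P_1, P_2} of the vertices of G that is separable on G is infinitely separable on G. -/
import Mathlib


/-- Infinitary propositional formulas over signature `σ`:
atoms, conjunctions and disjunctions of (index-)sets of formulas, implication. -/
inductive Formula (σ : Type) : Type 1
  | atom : σ → Formula σ
  | conj : (ι : Type) → (ι → Formula σ) → Formula σ
  | disj : (ι : Type) → (ι → Formula σ) → Formula σ
  | imp : Formula σ → Formula σ → Formula σ

namespace Formula

variable {σ : Type}

/-- `⊥` is the empty disjunction. -/
def bot : Formula σ := Formula.disj Empty (fun e => e.elim)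

/-- Binary conjunction `F ∧ G`. -/
def and (F G : Formula σ) : Formula σ := Formula.conj Bool (fun b => if b then F else G)

/-- Binary disjunction `F ∨ G`. -/
def or (F G : Formula σ) : Formula σ := Formula.disj Bool (fun b => if b then F else G)

/-- Negation `¬F` abbreviates `F → ⊥`. -/
def neg (F : Formula σ) : Formula σ := Formula.imp F bot

/-- Conjunction of a set of atoms. -/
def conjAtoms (S : Set σ) : Formula σ := Formula.conj S (fun p => Formula.atom p.val)

/-- Satisfaction of an infinitary formula by an interpretation `I ⊆ σ`. -/
def Sat (I : Set σ) : Formula σ → Prop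
  | .atom p => p ∈ I
  | .conj _ f => ∀ i, Sat I (f i)
  | .disj _ f => ∃ i, Sat I (f i)
  | .imp F G => Sat I F → Sat I G

open Classical in
/-- The reduct `F^I`. -/
noncomputable def reduct (I : Set σ) : Formula σ → Formula σ
  | .atom p => if p ∈ I then Formula.atom p else bot
  | .conj ι f => Formula.conj ι (fun i => reduct I (f i))
  | .disj ι f => Formula.disj ι (fun i => reduct I (f i))
  | .imp F G => if Sat I (Formula.imp F G) then Formula.imp (reduct I F) (reduct I G) else bot

/-- `I` is an `A`-stable model of `F`: `I` is minimal w.r.t. `≤_A`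
(`J ≤_A I` iff `J ⊆ I` and `I \ J ⊆ A`) among interpretations satisfying `F^I`. -/
def AStable (A : Set σ) (I : Set σ) (F : Formula σ) : Prop :=
  Sat I (reduct I F) ∧ ∀ J : Set σ, J ⊆ I → I \ J ⊆ A → Sat J (reduct I F) → J = I

/-- A stable model is a `σ`-stable model. -/
def Stable (I : Set σ) (F : Formula σ) : Prop := AStable Set.univ I F

/-- The strictly positive atoms `P(F)`. -/
def spos : Formula σ → Set σ
  | .atom p => {p}
  | .conj _ f => ⋃ i, spos (f i)
  | .disj _ f => ⋃ i, spos (f i)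
  | .imp _ H => spos H

/-- `F` is (syntactically) the formula `⊥`, i.e. an empty disjunction. -/
def IsBot : Formula σ → Prop
  | .disj ι _ => IsEmpty ι
  | _ => False

open Classical in
mutual
/-- Positive nonnegated atoms `Pnn(F)`. -/
noncomputable def pnn : Formula σ → Set σ
  | .atom p => {p}
  | .conj _ f => ⋃ i, pnn (f i)
  | .disj _ f => ⋃ i, pnn (f i)
  | .imp G H => if IsBot H then ∅ else nnn G ∪ pnn H

/-- Negative nonnegated atoms `Nnn(F)`. -/
noncomputable def nnn : Formula σ → Set σ
  | .atom _ => ∅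
  | .conj _ f => ⋃ i, nnn (f i)
  | .disj _ f => ⋃ i, nnn (f i)
  | .imp G H => if IsBot H then ∅ else pnn G ∪ nnn H
end

/-- The rules of a formula, as antecedent/consequent pairs. -/
def rules : Formula σ → Set (Formula σ × Formula σ)
  | .atom _ => ∅
  | .conj _ f => ⋃ i, rules (f i)
  | .disj _ f => ⋃ i, rules (f i)
  | .imp G H => insert (G, H) (rules H)

/-- Edge relation of the positive dependency graph `DG_A[F]` (vertex set `A`). -/
noncomputable def DGEdge (F : Formula σ) (A : Set σ) (p q : σ) : Prop :=
  p ∈ A ∧ q ∈ A ∧ ∃ R ∈ rules F, p ∈ spos R.2 ∧ q ∈ pnn R.1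

/-- The atoms occurring in a formula. -/
def atoms : Formula σ → Set σ
  | .atom p => {p}
  | .conj _ f => ⋃ i, atoms (f i)
  | .disj _ f => ⋃ i, atoms (f i)
  | .imp G H => atoms G ∪ atoms H

/-- `G` is a definition for the set `Q` of atoms: a conjunction of formulas
`H ∧ C^∧ → q` with `q ∈ Q`, `C ⊆ Q`, and no atom of `Q` occurring in `H`. -/
def IsDefinition (Q : Set σ) (G : Formula σ) : Prop :=
  ∃ (ι : Type) (g : ι → Formula σ), G = Formula.conj ι g ∧
    ∀ i, ∃ (H : Formula σ) (C : Set σ) (q : σ),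
      q ∈ Q ∧ C ⊆ Q ∧ (∀ p ∈ Q, p ∉ atoms H) ∧
      g i = Formula.imp (Formula.and H (conjAtoms C)) (Formula.atom q)

end Formula

section Graph

variable {V : Type*}

/-- An infinite walk in the directed graph with edge relation `E`. -/
def IsInfWalk (E : V → V → Prop) (w : ℕ → V) : Prop := ∀ i, E (w i) (w (i + 1))

/-- The partition `{P₁, P₂}` is infinitely separable: every infinite walk
visits `P₁` or `P₂` only finitely often. -/
def InfSeparable (E : V → V → Prop) (P1 P2 : Set V) : Prop :=
  ∀ w : ℕ → V, IsInfWalk E w → {i | w i ∈ P1}.Finite ∨ {i | w i ∈ P2}.Finite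

/-- `u` and `v` are in the same strongly connected component:
each is reachable from the other. -/
def SameSCC (E : V → V → Prop) (u v : V) : Prop :=
  Relation.ReflTransGen E u v ∧ Relation.ReflTransGen E v u

/-- The partition `{P₁, P₂}` is separable: every strongly connected
component is contained in `P₁` or in `P₂`. -/
def Separable (E : V → V → Prop) (P1 P2 : Set V) : Prop :=
  ∀ u v, SameSCC E u v → ((u ∈ P1 ∧ v ∈ P1) ∨ (u ∈ P2 ∧ v ∈ P2))

end Graph
/-- if a directed graph has finitely many strongly connected
components, then every separable partition is infinitely separable. -/
theorem separable_infSeparable_of_finitely_many_sccs {V : Type}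
    (E : V → V → Prop) (P1 P2 : Set V)
    (hdisj : Disjoint P1 P2) (hcover : P1 ∪ P2 = Set.univ)
    (hfin : ∃ S : Set V, S.Finite ∧ ∀ v : V, ∃ s ∈ S, SameSCC E v s)
    (h : Separable E P1 P2) : InfSeparable E P1 P2 := by
  intro w hw
  -- reachability along the walk
  have hreach : ∀ i j : ℕ, i ≤ j → Relation.ReflTransGen E (w i) (w j) := by
    intro i j hij
    induction j with
    | zero => simp only [Nat.le_zero] at hij; subst hij; exact Relation.ReflTransGen.refl
    | succ j ih =>
      rcases Nat.lt_or_ge i (j+1) with hlt | hge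
      · exact (ih (Nat.lt_succ_iff.mp hlt)).tail (hw j)
      · have : i = j + 1 := le_antisymm hij hge
        subst this; exact Relation.ReflTransGen.refl
  obtain ⟨S, hSfin, hrep⟩ := hfin
  haveI : Finite ↥S := hSfin.to_subtype
  have hg : ∀ i : ℕ, ∃ s : ↥S, SameSCC E (w i) s.val := by
    intro i
    obtain ⟨s, hs, hss⟩ := hrep (w i)
    exact ⟨⟨s, hs⟩, hss⟩
  choose f hf using hg
  obtain ⟨y, hy⟩ := Finite.exists_infinite_fiber f
  rw [Set.infinite_coe_iff] at hy
  obtain ⟨i0, hi0⟩ := hy.nonempty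
  have key : ∀ k, i0 ≤ k → SameSCC E (w i0) (w k) := by
    intro k hk
    obtain ⟨j, hj, hkj⟩ := hy.exists_gt k
    have hji0 : Relation.ReflTransGen E (w j) (w i0) := by
      have h1 := hf j
      have h2 := hf i0
      rw [(hj : f j = y)] at h1
      rw [(hi0 : f i0 = y)] at h2
      exact h1.1.trans h2.2
    refine ⟨hreach i0 k hk, ?_⟩
    exact (hreach k j hkj.le).trans hji0
  rcases (by rw [hcover]; exact Set.mem_univ (w i0) : w i0 ∈ P1 ∪ P2) with h1 | h2
  · right
    apply Set.Finite.subset (Set.finite_Iio i0)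
    intro i hi
    by_contra hlt
    simp only [Set.mem_Iio, not_lt] at hlt
    rcases h _ _ (key i hlt) with ⟨_, hP1⟩ | ⟨hP2, _⟩
    · exact hdisj.le_bot ⟨hP1, hi⟩
    · exact hdisj.le_bot ⟨h1, hP2⟩
  · left
    apply Set.Finite.subset (Set.finite_Iio i0)
    intro i hi
    by_contra hlt
    simp only [Set.mem_Iio, not_lt] at hlt
    rcases h _ _ (key i hlt) with ⟨hP1, _⟩ | ⟨_, hP2⟩
    · exact hdisj.le_bot ⟨hP1, h2⟩
    · exact hdisj.le_bot ⟨hi, hP2⟩
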